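/- Let F : [0,T] → [0,x_f] be C², increasing, surjective with F(0)=0, constant exactly on a maximal nondegenerate interval [t₀,t₁] ⊂ (0,T), and suppose the excised function G (defined by G(t)=F(t) for t ≤ t₀ and G(t)=F(t+t₁−t₀) for t ≥ t₀) is strictly increasing, C² with G'(t₀)=0, and G'''(t₀) exists and is nonzero. Then v = F' ∘ F⁻¹ (with F⁻¹ the generalized inverse) is not differentiable at x₀ = F(t₀). -/

import Mathlib

open Set Filter Topology


/-- Little-o mean value lemma: if `f t₀ = 0`, `f' t₀ = 0` and `f' s / (s-t₀)^n → 0`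
as `s → t₀⁺`, then `f s / (s-t₀)^(n+1) → 0`. -/
lemma aux_bound13 {f f' : ℝ → ℝ} {t₀ S : ℝ} (hts : t₀ < S)
    (hf : ∀ x ∈ Icc t₀ S, HasDerivWithinAt f (f' x) (Icc t₀ S) x)
    (hf0 : f t₀ = 0) (hf'0 : f' t₀ = 0) (n : ℕ)
    (h' : Tendsto (fun s => f' s / (s - t₀) ^ n) (𝓝[Ioc t₀ S] t₀) (𝓝 0)) :
    Tendsto (fun s => f s / (s - t₀) ^ (n + 1)) (𝓝[Ioc t₀ S] t₀) (𝓝 0) := by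
  rw [Metric.tendsto_nhdsWithin_nhds] at h' ⊢
  intro ε hε
  obtain ⟨δ, hδ, hδ'⟩ := h' (ε / 2) (by positivity)
  refine ⟨δ, hδ, fun {s} hs hsd => ?_⟩
  have hst : t₀ < s := hs.1
  have hsd' : s - t₀ < δ := by
    rw [Real.dist_eq, abs_of_pos (by linarith)] at hsd; exact hsd
  have key : ∀ x ∈ Icc t₀ s, ‖f' x‖ ≤ ε / 2 * (s - t₀) ^ n := by
    intro x hx
    rcases eq_or_lt_of_le hx.1 with h | hx1
    · rw [← h, hf'0, norm_zero]; exact mul_nonneg (by linarith) (pow_nonneg (by linarith) n)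
    · have hxm : x ∈ Ioc t₀ S := ⟨hx1, hx.2.trans hs.2⟩
      have hxd : dist x t₀ < δ := by
        rw [Real.dist_eq, abs_of_pos (by linarith)]; linarith [hx.2]
      have := hδ' hxm hxd
      rw [dist_zero_right, Real.norm_eq_abs, abs_div, abs_pow,
        abs_of_pos (by linarith : (0:ℝ) < x - t₀)] at this
      have hpow : (0:ℝ) < (x - t₀) ^ n := pow_pos (by linarith) n
      rw [div_lt_iff₀ hpow] at this
      have hmono : (x - t₀) ^ n ≤ (s - t₀) ^ n :=
        pow_le_pow_left₀ (by linarith) (by linarith [hx.2]) n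
      calc ‖f' x‖ = |f' x| := rfl
        _ ≤ ε / 2 * (x - t₀) ^ n := this.le
        _ ≤ ε / 2 * (s - t₀) ^ n := by
            apply mul_le_mul_of_nonneg_left hmono (by linarith)
  have hder : ∀ x ∈ Icc t₀ s, HasDerivWithinAt f (f' x) (Icc t₀ s) x := fun x hx =>
    (hf x ⟨hx.1, hx.2.trans hs.2⟩).mono (Icc_subset_Icc_right hs.2)
  have hmvt := Convex.norm_image_sub_le_of_norm_hasDerivWithin_le hder key (convex_Icc _ _)
    (left_mem_Icc.2 hst.le) (right_mem_Icc.2 hst.le)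
  rw [hf0, sub_zero] at hmvt
  rw [dist_zero_right, Real.norm_eq_abs, abs_div, abs_pow,
    abs_of_pos (by linarith : (0:ℝ) < s - t₀)]
  rw [div_lt_iff₀ (pow_pos (by linarith : (0:ℝ) < s - t₀) _)]
  calc |f s| = ‖f s‖ := rfl
    _ ≤ ε / 2 * (s - t₀) ^ n * ‖s - t₀‖ := hmvt
    _ = ε / 2 * (s - t₀) ^ (n + 1) := by
        rw [Real.norm_eq_abs, abs_of_pos (by linarith : (0:ℝ) < s - t₀)]; ring
    _ < ε * (s - t₀) ^ (n + 1) := by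
        have : (0:ℝ) < (s - t₀) ^ (n + 1) := pow_pos (by linarith) _
        nlinarith
theorem stmt_13 (T xf : ℝ) (hT : 0 < T) (hxf : 0 < xf)
    (F F' F'' : ℝ → ℝ)
    (hmono : MonotoneOn F (Icc 0 T))
    (hd1 : ∀ t ∈ Icc 0 T, HasDerivWithinAt F (F' t) (Icc 0 T) t)
    (hd2 : ∀ t ∈ Icc 0 T, HasDerivWithinAt F' (F'' t) (Icc 0 T) t)
    (hF''cont : ContinuousOn F'' (Icc 0 T))
    (hF0 : F 0 = 0) (hFT : F T = xf)
    (t₀ t₁ : ℝ) (ht₀ : 0 < t₀) (ht₀₁ : t₀ < t₁) (ht₁ : t₁ < T)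
    (hconst : ∀ t ∈ Icc t₀ t₁, F t = F t₀)
    (hmax : ∀ t ∈ Icc 0 T, F t = F t₀ → t ∈ Icc t₀ t₁)
    (G G' G'' : ℝ → ℝ) (G₃ : ℝ)
    (hG1 : ∀ t ∈ Icc 0 t₀, G t = F t)
    (hG2 : ∀ t ∈ Icc t₀ (T - (t₁ - t₀)), G t = F (t + (t₁ - t₀)))
    (hGsm : StrictMonoOn G (Icc 0 (T - (t₁ - t₀))))
    (hGd1 : ∀ t ∈ Icc 0 (T - (t₁ - t₀)), HasDerivWithinAt G (G' t) (Icc 0 (T - (t₁ - t₀))) t)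
    (hGd2 : ∀ t ∈ Icc 0 (T - (t₁ - t₀)), HasDerivWithinAt G' (G'' t) (Icc 0 (T - (t₁ - t₀))) t)
    (hG''cont : ContinuousOn G'' (Icc 0 (T - (t₁ - t₀))))
    (hG't₀ : G' t₀ = 0)
    (hGd3 : HasDerivWithinAt G'' G₃ (Icc 0 (T - (t₁ - t₀))) t₀) (hG₃ : G₃ ≠ 0)
    (Finv : ℝ → ℝ)
    (hFinv : ∀ x, Finv x = sInf {t | t ∈ Icc 0 T ∧ F t = x}) :
    ¬ DifferentiableWithinAt ℝ (fun x => F' (Finv x)) (Icc 0 xf) (F t₀) := by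
  intro hdiff
  set v : ℝ → ℝ := fun x => F' (Finv x) with hv
  set S := T - (t₁ - t₀) with hSdef
  have ht₀S : t₀ < S := by rw [hSdef]; linarith
  have hS0 : (0:ℝ) < S := lt_trans ht₀ ht₀S
  have ht₀Icc : t₀ ∈ Icc (0:ℝ) S := ⟨ht₀.le, ht₀S.le⟩
  have hGt₀ : G t₀ = F t₀ := hG1 t₀ ⟨ht₀.le, le_rfl⟩
  set x₀ := F t₀ with hx₀def
  have hsub1 : Icc t₀ S ⊆ Icc (0:ℝ) S := Icc_subset_Icc_left ht₀.le
  have hmaps : MapsTo (fun t => t + (t₁ - t₀)) (Icc t₀ S) (Icc 0 T) := by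
    intro t ht
    have h1 := ht.1; have h2 := ht.2
    rw [hSdef] at h2
    constructor
    · show (0:ℝ) ≤ t + (t₁ - t₀); linarith
    · show t + (t₁ - t₀) ≤ T; linarith
  -- D2: derivative transfer on the right branch
  have hD2 : ∀ s ∈ Icc t₀ S, F' (s + (t₁ - t₀)) = G' s := by
    intro s hs
    have hmem : s + (t₁ - t₀) ∈ Icc 0 T := hmaps hs
    have h1 : HasDerivWithinAt (fun t => F (t + (t₁ - t₀))) (F' (s + (t₁ - t₀))) (Icc t₀ S) s := by
      have := (hd1 _ hmem).comp s
        (((hasDerivAt_id s).add_const (t₁ - t₀)).hasDerivWithinAt) hmaps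
      simpa [Function.comp_def] using this
    have h2 : HasDerivWithinAt G (F' (s + (t₁ - t₀))) (Icc t₀ S) s :=
      h1.congr (fun t ht => hG2 t ht) (hG2 s hs)
    have h3 : HasDerivWithinAt G (G' s) (Icc t₀ S) s := (hGd1 s (hsub1 hs)).mono hsub1
    have hu : UniqueDiffWithinAt ℝ (Icc t₀ S) s := (uniqueDiffOn_Icc ht₀S) s hs
    rw [← h2.derivWithin hu, h3.derivWithin hu]
  -- E: F' t₀ = 0
  have hFt₀' : F' t₀ = 0 := by
    have hsub2 : Icc (0:ℝ) t₀ ⊆ Icc 0 T := Icc_subset_Icc_right (by linarith)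
    have hsub3 : Icc (0:ℝ) t₀ ⊆ Icc 0 S := Icc_subset_Icc_right ht₀S.le
    have h1 : HasDerivWithinAt F (F' t₀) (Icc 0 t₀) t₀ :=
      (hd1 t₀ (hsub2 (right_mem_Icc.2 ht₀.le))).mono hsub2
    have h2 : HasDerivWithinAt F (G' t₀) (Icc 0 t₀) t₀ :=
      ((hGd1 t₀ ht₀Icc).mono hsub3).congr (fun t ht => (hG1 t ht).symm)
        (hG1 t₀ (right_mem_Icc.2 ht₀.le)).symm
    have hu : UniqueDiffWithinAt ℝ (Icc 0 t₀) t₀ := (uniqueDiffOn_Icc ht₀) t₀ (right_mem_Icc.2 ht₀.le)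
    rw [← h1.derivWithin hu, h2.derivWithin hu, hG't₀]
  -- E: Finv x₀ = t₀ and v x₀ = 0
  have hFinvx₀ : Finv x₀ = t₀ := by
    rw [hFinv]
    have hset : {t | t ∈ Icc 0 T ∧ F t = x₀} = Icc t₀ t₁ := by
      ext t
      constructor
      · rintro ⟨ht, he⟩; exact hmax t ht he
      · intro ht
        exact ⟨⟨by linarith [ht.1], by linarith [ht.2]⟩, hconst t ht⟩
    rw [hset, csInf_Icc ht₀₁.le]
  have hvx₀ : v x₀ = 0 := by
    show F' (Finv x₀) = 0
    rw [hFinvx₀]; exact hFt₀'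
  -- continuity facts about G needed below; strict inequality at x₀
  have hx₀lt : ∀ s ∈ Ioc t₀ S, x₀ < G s := by
    intro s hs
    have := hGsm ht₀Icc (hsub1 ⟨hs.1.le, hs.2⟩) hs.1
    rwa [hGt₀] at this
  -- D1: Finv (G s) = s + (t₁ - t₀)
  have hD1 : ∀ s ∈ Ioc t₀ S, Finv (G s) = s + (t₁ - t₀) := by
    intro s hs
    have hsIcc : s ∈ Icc t₀ S := ⟨hs.1.le, hs.2⟩
    have hFs : F (s + (t₁ - t₀)) = G s := (hG2 s hsIcc).symm
    have hFc : ContinuousOn F (Icc 0 T) := fun t ht => (hd1 t ht).continuousWithinAt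
    have hclosed : IsClosed {t | t ∈ Icc 0 T ∧ F t = G s} := by
      have hseteq : {t | t ∈ Icc 0 T ∧ F t = G s} = Icc 0 T ∩ F ⁻¹' {G s} := rfl
      rw [hseteq]
      exact hFc.preimage_isClosed_of_isClosed isClosed_Icc isClosed_singleton
    have hne : (s + (t₁ - t₀)) ∈ {t | t ∈ Icc 0 T ∧ F t = G s} := ⟨hmaps hsIcc, hFs⟩
    have hbdd : BddBelow {t | t ∈ Icc 0 T ∧ F t = G s} := ⟨0, fun t ht => ht.1.1⟩
    have hmem := hclosed.csInf_mem ⟨_, hne⟩ hbdd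
    rw [hFinv]
    set m := sInf {t | t ∈ Icc 0 T ∧ F t = G s} with hm
    obtain ⟨⟨hm0, hmT⟩, hmF⟩ := hmem
    have hGs : x₀ < G s := hx₀lt s hs
    have hmt₁ : t₁ < m := by
      by_contra h
      push_neg at h
      have hle : F m ≤ F t₁ :=
        hmono ⟨hm0, hmT⟩ ⟨by linarith, by linarith⟩ h
      rw [hconst t₁ (right_mem_Icc.2 ht₀₁.le), hmF] at hle
      exact absurd hle (not_le.2 hGs)
    have hmS : m - (t₁ - t₀) ∈ Icc t₀ S := by
      constructor
      · linarith
      · rw [hSdef]; linarith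
    have heq : G (m - (t₁ - t₀)) = G s := by
      rw [hG2 _ hmS]
      have : m - (t₁ - t₀) + (t₁ - t₀) = m := by ring
      rw [this, hmF]
    have := hGsm.injOn (hsub1 hmS) (hsub1 hsIcc) heq
    linarith
  -- B: G' nonneg, hence G'' t₀ = 0
  have hG'nonneg : ∀ s ∈ Ioo (0:ℝ) S, 0 ≤ G' s := by
    intro s hs
    have hsI : s ∈ Icc (0:ℝ) S := ⟨hs.1.le, hs.2.le⟩
    have h := hasDerivWithinAt_iff_tendsto_slope.mp (hGd1 s hsI)
    have h2 : Tendsto (slope G s) (𝓝[Ioc s S] s) (𝓝 (G' s)) :=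
      h.mono_left (nhdsWithin_mono _ (fun t ht =>
        ⟨⟨(hs.1.trans ht.1).le, ht.2⟩, ne_of_gt ht.1⟩))
    haveI : (𝓝[Ioc s S] s).NeBot := by
      rw [nhdsWithin_Ioc_eq_nhdsGT hs.2]; infer_instance
    refine ge_of_tendsto h2 ?_
    filter_upwards [self_mem_nhdsWithin] with t ht
    rw [slope_def_field]
    apply div_nonneg
    · have := (hGsm hsI ⟨(hs.1.trans ht.1).le, ht.2⟩ ht.1).le
      linarith
    · linarith [ht.1]
  have hG''t₀ : G'' t₀ = 0 := by
    have hda : HasDerivAt G' (G'' t₀) t₀ :=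
      (hGd2 t₀ ht₀Icc).hasDerivAt (Icc_mem_nhds (by linarith) ht₀S)
    have hmin : IsLocalMin G' t₀ := by
      filter_upwards [isOpen_Ioo.mem_nhds (⟨ht₀, ht₀S⟩ : t₀ ∈ Ioo 0 S)] with s hs
      rw [hG't₀]; exact hG'nonneg s hs
    exact hmin.hasDerivAt_eq_zero hda
  -- the filter
  set l := 𝓝[Ioc t₀ S] t₀ with hl
  haveI hlne : l.NeBot := by
    rw [hl, nhdsWithin_Ioc_eq_nhdsGT ht₀S]; infer_instance
  have hIocsub : Ioc t₀ S ⊆ Icc 0 S \ {t₀} := fun t ht =>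
    ⟨⟨(ht₀.trans ht.1).le, ht.2⟩, ne_of_gt ht.1⟩
  -- C1
  have hC1 : Tendsto (fun s => G'' s / (s - t₀)) l (𝓝 G₃) := by
    have h := hasDerivWithinAt_iff_tendsto_slope.mp hGd3
    have h2 : Tendsto (slope G'' t₀) l (𝓝 G₃) :=
      h.mono_left (nhdsWithin_mono _ hIocsub)
    refine h2.congr (fun s => ?_)
    rw [slope_def_field, hG''t₀, sub_zero]
  -- C2
  have hC2 : Tendsto (fun s => G' s / (s - t₀) ^ 2) l (𝓝 (G₃ / 2)) := by
    have hder : ∀ x ∈ Icc t₀ S,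
        HasDerivWithinAt (fun s => G' s - G₃ / 2 * (s - t₀) ^ 2)
          (G'' x - G₃ * (x - t₀)) (Icc t₀ S) x := by
      intro x hx
      have h1 : HasDerivWithinAt G' (G'' x) (Icc t₀ S) x := (hGd2 x (hsub1 hx)).mono hsub1
      have h2 : HasDerivAt (fun s : ℝ => G₃ / 2 * (s - t₀) ^ 2) (G₃ * (x - t₀)) x := by
        have hb : HasDerivAt (fun s : ℝ => (s - t₀) ^ 2) (2 * (x - t₀)) x := by
          simpa [Pi.pow_def] using (((hasDerivAt_id x).sub_const t₀).pow 2)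
        have := hb.const_mul (G₃ / 2)
        exact this.congr_deriv (by ring)
      exact h1.sub h2.hasDerivWithinAt
    have h' : Tendsto (fun s => (G'' s - G₃ * (s - t₀)) / (s - t₀) ^ 1) l (𝓝 0) := by
      have h0 : Tendsto (fun s => G'' s / (s - t₀) - G₃) l (𝓝 (G₃ - G₃)) := hC1.sub_const G₃
      rw [sub_self] at h0
      refine Tendsto.congr' ?_ h0
      filter_upwards [self_mem_nhdsWithin] with s hs
      have hne : s - t₀ ≠ 0 := ne_of_gt (by linarith [hs.1])
      field_simp
    have key := aux_bound13 ht₀S hder (by simp [hG't₀]) (by simp [hG''t₀]) 1 h'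
    have key2 : Tendsto (fun s => (G' s - G₃ / 2 * (s - t₀) ^ 2) / (s - t₀) ^ 2 + G₃ / 2)
        l (𝓝 (G₃ / 2)) := by
      have := key.add_const (G₃ / 2)
      rw [zero_add] at this
      exact this
    refine Tendsto.congr' ?_ key2
    filter_upwards [self_mem_nhdsWithin] with s hs
    have hne : s - t₀ ≠ 0 := ne_of_gt (by linarith [hs.1])
    field_simp
    ring
  -- C3
  have hC3 : Tendsto (fun s => (G s - x₀) / (s - t₀) ^ 3) l (𝓝 (G₃ / 6)) := by
    have hder : ∀ x ∈ Icc t₀ S,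
        HasDerivWithinAt (fun s => G s - x₀ - G₃ / 6 * (s - t₀) ^ 3)
          (G' x - G₃ / 2 * (x - t₀) ^ 2) (Icc t₀ S) x := by
      intro x hx
      have h1 : HasDerivWithinAt G (G' x) (Icc t₀ S) x := (hGd1 x (hsub1 hx)).mono hsub1
      have h2 : HasDerivAt (fun s : ℝ => x₀ + G₃ / 6 * (s - t₀) ^ 3) (G₃ / 2 * (x - t₀) ^ 2) x := by
        have hb : HasDerivAt (fun s : ℝ => (s - t₀) ^ 3) (3 * (x - t₀) ^ 2) x := by
          have := (((hasDerivAt_id x).sub_const t₀).pow 3)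
          simpa [Pi.pow_def] using this
        have := (hb.const_mul (G₃ / 6)).const_add x₀
        exact this.congr_deriv (by ring)
      have := h1.sub h2.hasDerivWithinAt
      refine this.congr (fun y _ => ?_) ?_
      · simp only [Pi.sub_apply]; ring
      · simp only [Pi.sub_apply]; ring
    have h' : Tendsto (fun s => (G' s - G₃ / 2 * (s - t₀) ^ 2) / (s - t₀) ^ 2) l (𝓝 0) := by
      have h0 : Tendsto (fun s => G' s / (s - t₀) ^ 2 - G₃ / 2) l (𝓝 (G₃ / 2 - G₃ / 2)) :=
        hC2.sub_const (G₃ / 2)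
      rw [sub_self] at h0
      refine Tendsto.congr' ?_ h0
      filter_upwards [self_mem_nhdsWithin] with s hs
      have hne : s - t₀ ≠ 0 := ne_of_gt (by linarith [hs.1])
      field_simp
    have key := aux_bound13 ht₀S hder (by simp [hGt₀]) (by simp [hG't₀]) 2 h'
    have key2 : Tendsto (fun s => (G s - x₀ - G₃ / 6 * (s - t₀) ^ 3) / (s - t₀) ^ 3 + G₃ / 6)
        l (𝓝 (G₃ / 6)) := by
      have := key.add_const (G₃ / 6)
      rw [zero_add] at this
      exact this
    refine Tendsto.congr' ?_ key2
    filter_upwards [self_mem_nhdsWithin] with s hs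
    have hne : s - t₀ ≠ 0 := ne_of_gt (by linarith [hs.1])
    field_simp
    ring
  -- F: assemble
  have hslope : Tendsto (slope v x₀) (𝓝[Icc 0 xf \ {x₀}] x₀)
      (𝓝 (derivWithin v (Icc 0 xf) x₀)) :=
    hasDerivWithinAt_iff_tendsto_slope.mp hdiff.hasDerivWithinAt
  set L := derivWithin v (Icc 0 xf) x₀ with hLdef
  have hGtend : Tendsto G l (𝓝[Icc 0 xf \ {x₀}] x₀) := by
    rw [tendsto_nhdsWithin_iff]
    constructor
    · have hc : ContinuousWithinAt G (Icc 0 S) t₀ := (hGd1 t₀ ht₀Icc).continuousWithinAt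
      have hc2 : Tendsto G (𝓝[Icc 0 S] t₀) (𝓝 x₀) := by
        rw [← hGt₀]; exact hc
      exact hc2.mono_left (nhdsWithin_mono _ (fun t ht => ⟨(ht₀.trans ht.1).le, ht.2⟩))
    · filter_upwards [self_mem_nhdsWithin] with s hs
      have hsIcc : s ∈ Icc t₀ S := ⟨hs.1.le, hs.2⟩
      refine ⟨⟨?_, ?_⟩, ?_⟩
      · rw [hG2 s hsIcc, ← hF0]
        exact hmono (left_mem_Icc.2 (by linarith)) (hmaps hsIcc) (by linarith [hsIcc.1])
      · rw [hG2 s hsIcc, ← hFT]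
        exact hmono (hmaps hsIcc) (right_mem_Icc.2 (by linarith)) (hmaps hsIcc).2
      · exact (hx₀lt s hs).ne'
  have hq : Tendsto (fun s => slope v x₀ (G s)) l (𝓝 L) := hslope.comp hGtend
  have hzero : Tendsto (fun s : ℝ => s - t₀) l (𝓝 0) := by
    have h0 : Tendsto (fun s : ℝ => s - t₀) (𝓝 t₀) (𝓝 (t₀ - t₀)) :=
      (continuous_id.sub continuous_const).tendsto t₀
    rw [sub_self] at h0
    exact h0.mono_left nhdsWithin_le_nhds
  have hfinal1 : Tendsto (fun s => slope v x₀ (G s) * ((G s - x₀) / (s - t₀) ^ 3) * (s - t₀))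
      l (𝓝 (L * (G₃ / 6) * 0)) := (hq.mul hC3).mul hzero
  have hfinal2 : Tendsto (fun s => slope v x₀ (G s) * ((G s - x₀) / (s - t₀) ^ 3) * (s - t₀))
      l (𝓝 (G₃ / 2)) := by
    refine Tendsto.congr' ?_ hC2
    filter_upwards [self_mem_nhdsWithin] with s hs
    have hsIcc : s ∈ Icc t₀ S := ⟨hs.1.le, hs.2⟩
    have hvG : v (G s) = G' s := by
      show F' (Finv (G s)) = G' s
      rw [hD1 s hs]
      exact hD2 s hsIcc
    have hne1 : s - t₀ ≠ 0 := ne_of_gt (by linarith [hs.1])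
    have hne2 : G s - x₀ ≠ 0 := sub_ne_zero.2 (hx₀lt s hs).ne'
    rw [slope_def_field, hvG, hvx₀, sub_zero]
    field_simp
  have hcontra : L * (G₃ / 6) * 0 = G₃ / 2 := tendsto_nhds_unique hfinal1 hfinal2
  rw [mul_zero] at hcontra
  exact hG₃ (by linarith)
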